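/- Let w be real weights on a tripartite graph on I ∪ J ∪ K and let λ be sufficiently large (larger than 5·max|w| suffices, viewed as making the construction work). Define symmetric weights w' on the complete graph on V = I ∪ J ∪ K by: w'_{i,j} = w_{i,j} for (i,j) ∈ I×J; w'_{ℓ₁,ℓ₂} = w_{ℓ₁,ℓ₂} + 2λ for pairs within the same part; w'_{ℓ,k} = w_{ℓ,k} + 5λ for (ℓ,k) ∈ (I∪J)×K; and set α = 5λ. Then the complete graph with weights w' contains three distinct vertices x,y,z with min{w'_{x,z}, w'_{y,z}} − w'_{x,y} ≥ α if and only if there exists (i,j,k) ∈ I×J×K with min{w_{i,k}, w_{k,j}} − w_{i,j} ≥ 0. -/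
import Mathlib


/-- The shifted weights of the reduction from the tripartite positive triangle problem
to the positive triangle problem: edges between `I` and `J` keep their weight, edges
inside a part are shifted by `2λ`, and edges between `I ∪ J` and `K` are shifted by `5λ`. -/
noncomputable def shiftWeight {I J K : Type*} (w : (I ⊕ J ⊕ K) → (I ⊕ J ⊕ K) → ℝ)
    (lam : ℝ) : (I ⊕ J ⊕ K) → (I ⊕ J ⊕ K) → ℝ :=
  fun u v => w u v +
    match u, v with
    | Sum.inl _, Sum.inl _ => 2 * lam
    | Sum.inl _, Sum.inr (Sum.inl _) => 0
    | Sum.inr (Sum.inl _), Sum.inl _ => 0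
    | Sum.inl _, Sum.inr (Sum.inr _) => 5 * lam
    | Sum.inr (Sum.inr _), Sum.inl _ => 5 * lam
    | Sum.inr (Sum.inl _), Sum.inr (Sum.inl _) => 2 * lam
    | Sum.inr (Sum.inl _), Sum.inr (Sum.inr _) => 5 * lam
    | Sum.inr (Sum.inr _), Sum.inr (Sum.inl _) => 5 * lam
    | Sum.inr (Sum.inr _), Sum.inr (Sum.inr _) => 2 * lam

/-- For `λ` large enough (e.g. `λ > 5 max |w| + 1`), the complete graph on `I ∪ J ∪ K`
with the shifted weights has a positive triangle with threshold `α = 5λ` if and only if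
the original tripartite graph has a tripartite positive triangle. -/
theorem shifted_positive_triangle_iff {I J K : Type*} [Fintype I] [Fintype J] [Fintype K]
    (w : (I ⊕ J ⊕ K) → (I ⊕ J ⊕ K) → ℝ) (hsymm : ∀ u v, w u v = w v u)
    (lam : ℝ) (hlam : ∀ u v, 5 * |w u v| + 1 < lam) :
    (∃ x y z : I ⊕ J ⊕ K, x ≠ y ∧ y ≠ z ∧ x ≠ z ∧
        min (shiftWeight w lam x z) (shiftWeight w lam y z) - shiftWeight w lam x y ≥ 5 * lam)
    ↔ (∃ (i : I) (j : J) (k : K),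
        min (w (Sum.inl i) (Sum.inr (Sum.inr k))) (w (Sum.inr (Sum.inl j)) (Sum.inr (Sum.inr k)))
          - w (Sum.inl i) (Sum.inr (Sum.inl j)) ≥ 0) := by
  constructor
  · rintro ⟨x, y, z, hxy, hyz, hxz, h⟩
    rw [ge_iff_le, le_sub_iff_add_le, le_min_iff] at h
    obtain ⟨h1, h2⟩ := h
    have hb : ∀ u v : I ⊕ J ⊕ K, w u v < lam / 5 ∧ -(lam / 5) < w u v := by
      intro u v
      have hl := hlam u v
      have h3 := le_abs_self (w u v)
      have h4 := neg_abs_le (w u v)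
      constructor <;> linarith
    have hpos : 1 < lam := by
      have hl := hlam x x
      have := abs_nonneg (w x x)
      linarith
    obtain ⟨c1, c1'⟩ := hb x y
    obtain ⟨c2, c2'⟩ := hb x z
    obtain ⟨c3, c3'⟩ := hb y z
    have hs := hsymm x y
    rcases x with i | j | k <;> rcases y with i' | j' | k' <;> rcases z with i'' | j'' | k'' <;>
      simp only [shiftWeight] at h1 h2 <;>
      first
        | (exfalso; linarith)
        | exact ⟨i, j', k'', by
            rw [ge_iff_le, le_sub_iff_add_le, le_min_iff]
            constructor <;> linarith⟩
        | exact ⟨i', j, k'', by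
            rw [ge_iff_le, le_sub_iff_add_le, le_min_iff]
            constructor <;> linarith⟩
  · rintro ⟨i, j, k, h⟩
    refine ⟨Sum.inl i, Sum.inr (Sum.inl j), Sum.inr (Sum.inr k), by simp, by simp, by simp, ?_⟩
    simp only [shiftWeight]
    rw [ge_iff_le, le_sub_iff_add_le, le_min_iff]
    rw [ge_iff_le, le_sub_iff_add_le, le_min_iff] at h
    obtain ⟨h1, h2⟩ := h
    constructor <;> linarith
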